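/- Let Φ : ℝ → ℝ be bounded and Lipschitz continuous with M := sup_{x∈ℝ}|Φ(x)| > 0, differentiable at 0 with Φ'(0) > 1, and let λ(V) := 2M + V. Define for V > 0: I(V) := (1/V)·∫₀^V [ z·(2z + Φ(−z) − Φ(z)) ] / [ √(V²−z²)·(z − Φ(z) + λ(V))·(−z − Φ(−z) + λ(V)) ] dz. Then I is continuous on (0,∞) and there exists V̄ > 0 with I(V̄) = 0. -/

import Mathlib

open Set Filter MeasureTheory Topology

/-- The matching functional
`I(V) = (1/V)·∫₀^V z(2z+Φ(−z)−Φ(z)) / (√(V²−z²)(z−Φ(z)+λ(V))(−z−Φ(−z)+λ(V))) dz`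
with `λ(V) = 2M + V`, whose zeros correspond to traveling wave velocities. -/
noncomputable def Ifun (Φ : ℝ → ℝ) (M V : ℝ) : ℝ :=
  (1/V) * ∫ z in (0:ℝ)..V, z * (2*z + Φ (-z) - Φ z) /
    (Real.sqrt (V^2 - z^2) * (z - Φ z + (2*M + V)) * (-z - Φ (-z) + (2*M + V)))

namespace Stmt14Aux

/-- numerator factor -/
noncomputable def psiF (Φ : ℝ → ℝ) (z : ℝ) : ℝ := 2*z + Φ (-z) - Φ z

/-- one denominator factor -/
noncomputable def d1F (Φ : ℝ → ℝ) (M W z : ℝ) : ℝ := z - Φ z + (2*M + W)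

/-- product of denominator factors -/
noncomputable def denF (Φ : ℝ → ℝ) (M W z : ℝ) : ℝ := d1F Φ M W z * d1F Φ M W (-z)

/-- integrand after substitution `z = |V| sin θ` -/
noncomputable def gF (Φ : ℝ → ℝ) (M V θ : ℝ) : ℝ :=
  Real.sin θ * psiF Φ (|V| * Real.sin θ) / denF Φ M |V| (|V| * Real.sin θ)

/-- transformed functional -/
noncomputable def Jfun (Φ : ℝ → ℝ) (M V : ℝ) : ℝ :=
  ∫ θ in (0:ℝ)..(Real.pi/2), gF Φ M V θ

variable {Φ : ℝ → ℝ} {M : ℝ}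

lemma d1F_ge (hphi : ∀ x, |Φ x| ≤ M) {W z : ℝ} (hz : |z| ≤ W) :
    M ≤ d1F Φ M W z := by
  have h := abs_le.1 (hphi z)
  have h2 := abs_le.1 hz
  unfold d1F; linarith [h.2, h2.1]

lemma denF_ge (hphi : ∀ x, |Φ x| ≤ M) {W z : ℝ} (hM : 0 < M) (hz : |z| ≤ W) :
    M^2 ≤ denF Φ M W z := by
  have h1 := d1F_ge hphi hz
  have h2 := d1F_ge hphi (by rwa [abs_neg] : |(-z)| ≤ W)
  have : M * M ≤ d1F Φ M W z * d1F Φ M W (-z) :=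
    mul_le_mul h1 h2 hM.le (le_trans hM.le h1)
  simpa [denF, sq] using this

lemma denF_pos (hphi : ∀ x, |Φ x| ≤ M) {W z : ℝ} (hM : 0 < M) (hz : |z| ≤ W) :
    0 < denF Φ M W z :=
  lt_of_lt_of_le (by positivity) (denF_ge hphi hM hz)

lemma psiF_ge (hphi : ∀ x, |Φ x| ≤ M) (z : ℝ) : 2*z - 2*M ≤ psiF Φ z := by
  have h1 := abs_le.1 (hphi z)
  have h2 := abs_le.1 (hphi (-z))
  unfold psiF; linarith [h1.2, h2.1]

lemma psiF_abs_le (hphi : ∀ x, |Φ x| ≤ M) (z : ℝ) : |psiF Φ z| ≤ 2*|z| + 2*M := by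
  have h1 := hphi z
  have h2 := hphi (-z)
  unfold psiF
  calc |2*z + Φ (-z) - Φ z| ≤ |2*z| + |Φ (-z)| + |Φ z| := by
        apply (abs_sub _ _).trans; gcongr; exact abs_add_le _ _
    _ ≤ 2*|z| + 2*M := by rw [abs_mul]; simp only [abs_two]; linarith

lemma gF_continuous (hphi : ∀ x, |Φ x| ≤ M) (hM : 0 < M) (hc : Continuous Φ) :
    Continuous (Function.uncurry (gF Φ M)) := by
  have hnum : Continuous fun p : ℝ×ℝ => Real.sin p.2 * psiF Φ (|p.1| * Real.sin p.2) := by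
    unfold psiF; fun_prop
  have hden : Continuous fun p : ℝ×ℝ => denF Φ M |p.1| (|p.1| * Real.sin p.2) := by
    unfold denF d1F; fun_prop
  have hne : ∀ p : ℝ×ℝ, denF Φ M |p.1| (|p.1| * Real.sin p.2) ≠ 0 := by
    intro p
    refine (denF_pos hphi hM ?_).ne'
    rw [abs_mul, abs_abs]
    calc |p.1| * |Real.sin p.2| ≤ |p.1| * 1 := by
          gcongr; exact Real.abs_sin_le_one p.2
      _ = |p.1| := mul_one _
  exact hnum.div hden hne

lemma Jfun_continuous (hphi : ∀ x, |Φ x| ≤ M) (hM : 0 < M) (hc : Continuous Φ) :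
    Continuous (Jfun Φ M) :=
  intervalIntegral.continuous_parametric_intervalIntegral_of_continuous' (μ := volume)
    (gF_continuous hphi hM hc) 0 (Real.pi/2)

lemma Ifun_eq_Jfun (hphi : ∀ x, |Φ x| ≤ M) (hM : 0 < M) (hc : Continuous Φ)
    {V : ℝ} (hV : 0 < V) : Ifun Φ M V = Jfun Φ M V := by
  have hpi := Real.pi_pos
  have habs : |V| = V := abs_of_pos hV
  set F : ℝ → ℝ := fun z => z * psiF Φ z /
    (Real.sqrt (V^2 - z^2) * d1F Φ M V z * d1F Φ M V (-z)) with hFdef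
  have hIfun : Ifun Φ M V = (1/V) * ∫ z in (0:ℝ)..V, F z := rfl
  -- continuity pieces
  have hnumc : Continuous fun z : ℝ => z * psiF Φ z := by unfold psiF; fun_prop
  have hdenc : Continuous fun z : ℝ =>
      Real.sqrt (V^2 - z^2) * d1F Φ M V z * d1F Φ M V (-z) := by
    unfold d1F; fun_prop
  -- integrability of F on [0, V]
  have hFint : IntervalIntegrable F volume 0 V := by
    set C := V*(2*V+2*M)/(M^2 * Real.sqrt V) with hCdef
    have hC : 0 ≤ C := by positivity
    have hBint : IntervalIntegrable (fun z => C * (V - z) ^ (-(1/2):ℝ)) volume 0 V := by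
      have h1 : IntervalIntegrable (fun z : ℝ => z ^ (-(1/2):ℝ)) volume 0 V :=
        intervalIntegral.intervalIntegrable_rpow' (by norm_num)
      have h2 := (h1.comp_sub_left V)
      simp only [sub_zero, sub_self] at h2
      exact (h2.const_mul C).symm
    apply hBint.mono_fun ((hnumc.measurable.div hdenc.measurable).aestronglyMeasurable)
    rw [Filter.EventuallyLE, ae_restrict_iff' measurableSet_uIoc]
    apply Eventually.of_forall
    intro z hz
    rw [uIoc_of_le hV.le] at hz
    have hz0 : 0 < z := hz.1
    have hzV : z ≤ V := hz.2
    have hzabs : |z| ≤ V := by rw [abs_of_pos hz0]; exact hzV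
    have hd1 : M ≤ d1F Φ M V z := d1F_ge hphi hzabs
    have hd2 : M ≤ d1F Φ M V (-z) := d1F_ge hphi (by rwa [abs_neg])
    have hnumb : |z * psiF Φ z| ≤ V*(2*V+2*M) := by
      rw [abs_mul]
      have h1 := psiF_abs_le hphi z
      have h2 : |z| ≤ V := hzabs
      have h3 : |psiF Φ z| ≤ 2*V + 2*M := by
        calc |psiF Φ z| ≤ 2*|z| + 2*M := h1
          _ ≤ 2*V + 2*M := by linarith
      exact mul_le_mul h2 h3 (abs_nonneg _) hV.le
    rcases eq_or_lt_of_le hzV with rfl | hzV'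
    · have h00 : ((0:ℝ) ^ (-(1/2):ℝ)) = 0 := Real.zero_rpow (by norm_num)
      simp [hFdef, Real.norm_eq_abs, sub_self, h00]
    · simp only [Real.norm_eq_abs]
      have hVz0 : 0 < V - z := by linarith
      have hsq : Real.sqrt (V - z) * Real.sqrt V ≤ Real.sqrt (V^2 - z^2) := by
        have h9 : V^2 - z^2 = (V - z) * (V + z) := by ring
        rw [h9, Real.sqrt_mul hVz0.le]
        apply mul_le_mul_of_nonneg_left _ (Real.sqrt_nonneg _)
        exact Real.sqrt_le_sqrt (by linarith)
      have hSpos : 0 < Real.sqrt (V^2 - z^2) := by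
        apply Real.sqrt_pos.2; nlinarith
      have hd1' : 0 < d1F Φ M V z := lt_of_lt_of_le hM hd1
      have hd2' : 0 < d1F Φ M V (-z) := lt_of_lt_of_le hM hd2
      have s1 : Real.sqrt (V - z) * Real.sqrt V * M ≤ Real.sqrt (V^2 - z^2) * d1F Φ M V z :=
        mul_le_mul hsq hd1 hM.le hSpos.le
      have s2 : Real.sqrt (V - z) * Real.sqrt V * M * M ≤
          Real.sqrt (V^2 - z^2) * d1F Φ M V z * d1F Φ M V (-z) :=
        mul_le_mul s1 hd2 hM.le (mul_nonneg hSpos.le hd1'.le)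
      have habsF : |F z| ≤ V*(2*V+2*M) / (Real.sqrt (V - z) * Real.sqrt V * M * M) := by
        have hdpos : 0 < Real.sqrt (V^2 - z^2) * d1F Φ M V z * d1F Φ M V (-z) :=
          mul_pos (mul_pos hSpos hd1') hd2'
        have hFz : F z = z * psiF Φ z /
            (Real.sqrt (V^2 - z^2) * d1F Φ M V z * d1F Φ M V (-z)) := rfl
        rw [hFz, abs_div, abs_of_pos hdpos]
        exact div_le_div₀ (by positivity) hnumb (by positivity) s2
      have hrw : C * (V - z) ^ (-(1/2):ℝ) =
          V*(2*V+2*M) / (Real.sqrt (V - z) * Real.sqrt V * M * M) := by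
        rw [Real.rpow_neg hVz0.le, ← Real.sqrt_eq_rpow, hCdef]
        rw [eq_div_iff (by positivity)]
        have hsst : Real.sqrt (V - z) ≠ 0 := by positivity
        field_simp
      rw [hrw]
      have habs2 : |V*(2*V+2*M) / (Real.sqrt (V - z) * Real.sqrt V * M * M)| =
          V*(2*V+2*M) / (Real.sqrt (V - z) * Real.sqrt V * M * M) := by
        apply abs_of_nonneg; positivity
      rw [habs2]
      exact habsF
  -- change of variables on [0, b] for b < π/2
  have hsub : ∀ b ∈ Ico (0:ℝ) (Real.pi/2),
      (∫ θ in (0:ℝ)..b, V * gF Φ M V θ) = ∫ z in (0:ℝ)..(V * Real.sin b), F z := by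
    intro b hb
    have hb0 := hb.1
    have hb2 := hb.2
    have hcosb : 0 < Real.cos b := Real.cos_pos_of_mem_Ioo ⟨by linarith, hb2⟩
    have hsb1 : Real.sin b < 1 := by
      nlinarith [Real.sin_sq_add_cos_sq b, Real.sin_le_one b]
    have hmono : ∀ θ ∈ Icc (0:ℝ) b, V * Real.sin θ ∈ Icc 0 (V * Real.sin b) := by
      intro θ hθ
      obtain ⟨hθ1, hθ2⟩ := hθ
      have h0 : 0 ≤ Real.sin θ :=
        Real.sin_nonneg_of_nonneg_of_le_pi hθ1 (by linarith)
      have h1 : Real.sin θ ≤ Real.sin b := by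
        rcases eq_or_lt_of_le hθ2 with rfl | hlt
        · exact le_rfl
        · exact (Real.strictMonoOn_sin ⟨by linarith, by linarith⟩ ⟨by linarith, hb2.le⟩ hlt).le
      exact ⟨by positivity, mul_le_mul_of_nonneg_left h1 hV.le⟩
    have hVsb : V * Real.sin b < V := by nlinarith
    have hVsb0 : 0 ≤ V * Real.sin b := by
      have := Real.sin_nonneg_of_nonneg_of_le_pi hb0 (by linarith)
      positivity
    have hFcont : ContinuousOn F (Icc 0 (V * Real.sin b)) := by
      apply ContinuousOn.div hnumc.continuousOn hdenc.continuousOn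
      intro z hz
      have hz0 : 0 ≤ z := hz.1
      have hzV : z < V := lt_of_le_of_lt hz.2 hVsb
      have hzabs : |z| ≤ V := by rw [abs_of_nonneg hz0]; exact hzV.le
      have hSpos : 0 < Real.sqrt (V^2 - z^2) := Real.sqrt_pos.2 (by nlinarith)
      have hd1' : 0 < d1F Φ M V z := lt_of_lt_of_le hM (d1F_ge hphi hzabs)
      have hd2' : 0 < d1F Φ M V (-z) := lt_of_lt_of_le hM (d1F_ge hphi (by rwa [abs_neg]))
      exact (mul_pos (mul_pos hSpos hd1') hd2').ne'
    have hderiv : ∀ θ ∈ uIcc (0:ℝ) b, HasDerivAt (fun x => V * Real.sin x) (V * Real.cos θ) θ :=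
      fun θ _ => (Real.hasDerivAt_sin θ).const_mul V
    have hcont' : ContinuousOn (fun θ => V * Real.cos θ) (uIcc 0 b) := by fun_prop
    have himg : ContinuousOn F ((fun θ => V * Real.sin θ) '' uIcc 0 b) := by
      apply hFcont.mono
      rintro _ ⟨θ, hθ, rfl⟩
      rw [uIcc_of_le hb0] at hθ
      exact hmono θ hθ
    have hcv := intervalIntegral.integral_comp_smul_deriv' hderiv hcont' himg
    simp only [Real.sin_zero, mul_zero] at hcv
    rw [← hcv]
    apply intervalIntegral.integral_congr
    intro θ hθ
    rw [uIcc_of_le hb0] at hθ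
    have hcosθ : 0 < Real.cos θ :=
      Real.cos_pos_of_mem_Ioo ⟨by linarith [hθ.1], by linarith [hθ.2, hb2]⟩
    have hsθ0 : 0 ≤ Real.sin θ :=
      Real.sin_nonneg_of_nonneg_of_le_pi hθ.1 (by linarith [hθ.2])
    have hzabs : |V * Real.sin θ| ≤ V := by
      rw [abs_of_nonneg (by positivity)]
      nlinarith [Real.sin_le_one θ]
    have hd1' : 0 < d1F Φ M V (V * Real.sin θ) := lt_of_lt_of_le hM (d1F_ge hphi hzabs)
    have hd2' : 0 < d1F Φ M V (-(V * Real.sin θ)) :=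
      lt_of_lt_of_le hM (d1F_ge hphi (by rwa [abs_neg]))
    have hsqrt : Real.sqrt (V^2 - (V * Real.sin θ)^2) = V * Real.cos θ := by
      have h9 : V^2 - (V * Real.sin θ)^2 = (V * Real.cos θ)^2 := by
        nlinarith [Real.sin_sq_add_cos_sq θ]
      rw [h9, Real.sqrt_sq (by positivity)]
    show V * gF Φ M V θ = (V * Real.cos θ) • F (V * Real.sin θ)
    have hFz : F (V * Real.sin θ) = (V * Real.sin θ) * psiF Φ (V * Real.sin θ) /
        (Real.sqrt (V^2 - (V * Real.sin θ)^2) * d1F Φ M V (V * Real.sin θ)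
          * d1F Φ M V (-(V * Real.sin θ))) := rfl
    rw [smul_eq_mul, hFz, hsqrt]
    unfold gF denF
    rw [habs]
    field_simp
  -- take limits b → π/2
  have hgc : Continuous (gF Φ M V) := by
    have h := (gF_continuous hphi hM hc).comp
      (continuous_const.prodMk continuous_id : Continuous fun θ : ℝ => (V, θ))
    exact h
  have hQc : Continuous (fun b => ∫ θ in (0:ℝ)..b, V * gF Φ M V θ) := by
    apply intervalIntegral.continuous_primitive
    exact fun a b => ((continuous_const.mul hgc)).intervalIntegrable a b
  have hPc : ContinuousOn (fun c => ∫ z in (0:ℝ)..c, F z) (uIcc 0 V) :=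
    intervalIntegral.continuousOn_primitive_interval' hFint left_mem_uIcc
  have hbV : Tendsto (fun b => V * Real.sin b) (𝓝[<] (Real.pi/2)) (𝓝[uIcc 0 V] V) := by
    apply tendsto_nhdsWithin_of_tendsto_nhds_of_eventually_within
    · have h1 : Tendsto (fun b => V * Real.sin b) (𝓝 (Real.pi/2)) (𝓝 (V * Real.sin (Real.pi/2))) :=
        (continuous_const.mul Real.continuous_sin).tendsto _
      rw [Real.sin_pi_div_two, mul_one] at h1
      exact h1.mono_left nhdsWithin_le_nhds
    · filter_upwards [Ioo_mem_nhdsLT_of_mem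
        (⟨by linarith, le_refl _⟩ : Real.pi/2 ∈ Ioc (0:ℝ) (Real.pi/2))] with b hb
      have hs0 : 0 ≤ Real.sin b := Real.sin_nonneg_of_nonneg_of_le_pi hb.1.le (by linarith [hb.2])
      have hs1 : Real.sin b ≤ 1 := Real.sin_le_one b
      rw [uIcc_of_le hV.le]
      exact ⟨by positivity, by nlinarith⟩
  have hlim1 : Tendsto (fun b => ∫ z in (0:ℝ)..(V * Real.sin b), F z)
      (𝓝[<] (Real.pi/2)) (𝓝 (∫ z in (0:ℝ)..V, F z)) :=
    ((hPc V right_mem_uIcc).tendsto).comp hbV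
  have hlim2 : Tendsto (fun b => ∫ θ in (0:ℝ)..b, V * gF Φ M V θ)
      (𝓝[<] (Real.pi/2)) (𝓝 (∫ θ in (0:ℝ)..(Real.pi/2), V * gF Φ M V θ)) :=
    (hQc.tendsto _).mono_left nhdsWithin_le_nhds
  have hcong : (fun b => ∫ θ in (0:ℝ)..b, V * gF Φ M V θ) =ᶠ[𝓝[<] (Real.pi/2)]
      (fun b => ∫ z in (0:ℝ)..(V * Real.sin b), F z) := by
    filter_upwards [Ioo_mem_nhdsLT_of_mem
      (⟨by linarith, le_refl _⟩ : Real.pi/2 ∈ Ioc (0:ℝ) (Real.pi/2))] with b hb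
    exact hsub b ⟨hb.1.le, hb.2⟩
  have hkey : (∫ θ in (0:ℝ)..(Real.pi/2), V * gF Φ M V θ) = ∫ z in (0:ℝ)..V, F z :=
    tendsto_nhds_unique (hlim2.congr' hcong) hlim1
  -- conclude
  rw [hIfun, ← hkey, intervalIntegral.integral_const_mul]
  unfold Jfun
  field_simp


lemma Jfun_neg_small (hphi : ∀ x, |Φ x| ≤ M) (hM : 0 < M) (hc : Continuous Φ)
    (hdiff : DifferentiableAt ℝ Φ 0) (hder : 1 < deriv Φ 0) :
    ∃ v : ℝ, 0 < v ∧ v ≤ M ∧ Jfun Φ M v < 0 := by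
  set d := deriv Φ 0 with hd
  have hΦd : HasDerivAt Φ d 0 := hdiff.hasDerivAt
  have hneg : HasDerivAt (fun z : ℝ => Φ (-z)) (-d) 0 := by
    have h1 : HasDerivAt (fun z : ℝ => -z) (-1) 0 := (hasDerivAt_id 0).neg
    have h2 := HasDerivAt.comp (0:ℝ) (by simpa using hΦd) h1
    simpa [Function.comp_def] using h2
  have hpsi : HasDerivAt (psiF Φ) (2 - 2*d) 0 := by
    have h2 : HasDerivAt (fun z : ℝ => 2*z) 2 0 := by
      simpa using (hasDerivAt_id (0:ℝ)).const_mul 2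
    have h3 := (h2.add hneg).sub hΦd
    have h4 : (2:ℝ) + -d - d = 2 - 2*d := by ring
    rw [← h4]
    exact h3
  have hltd : (2:ℝ) - 2*d < 0 := by linarith
  have hev : ∀ᶠ z in 𝓝[≠] (0:ℝ), slope (psiF Φ) 0 z < 0 :=
    (hasDerivAt_iff_tendsto_slope.1 hpsi).eventually_lt_const hltd
  have hev' : ∀ᶠ z in 𝓝[>] (0:ℝ), psiF Φ z < 0 := by
    have h1 : 𝓝[>] (0:ℝ) ≤ 𝓝[≠] (0:ℝ) := nhdsWithin_mono 0 (fun x hx => ne_of_gt hx)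
    filter_upwards [hev.filter_mono h1, self_mem_nhdsWithin] with z hz hz0
    have hz0' : (0:ℝ) < z := hz0
    have hpsi0 : psiF Φ 0 = 0 := by simp [psiF]
    rw [slope_def_field, hpsi0, sub_zero, sub_zero] at hz
    rcases div_neg_iff.1 hz with ⟨_, h⟩ | ⟨h, _⟩
    · linarith
    · exact h
  obtain ⟨s, hs, hsub⟩ := hev'.exists_mem
  rw [mem_nhdsGT_iff_exists_Ioo_subset] at hs
  obtain ⟨u, hu, hIoo⟩ := hs
  have hu0 : (0:ℝ) < u := hu
  refine ⟨min (u/2) M, lt_min (by linarith) hM, min_le_right _ _, ?_⟩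
  set v := min (u/2) M with hv
  have hv0 : 0 < v := lt_min (by linarith) hM
  have hvu : v < u := lt_of_le_of_lt (min_le_left _ _) (by linarith)
  have habsv : |v| = v := abs_of_pos hv0
  have hgc : Continuous (gF Φ M v) := by
    have h := (gF_continuous hphi hM hc).comp
      (continuous_const.prodMk continuous_id : Continuous fun θ : ℝ => (v, θ))
    exact h
  have key : 0 < ∫ θ in (0:ℝ)..(Real.pi/2), -gF Φ M v θ := by
    apply intervalIntegral.intervalIntegral_pos_of_pos_on
    · exact hgc.neg.intervalIntegrable _ _
    · intro θ hθ
      have hs0 : 0 < Real.sin θ :=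
        Real.sin_pos_of_pos_of_lt_pi hθ.1 (by linarith [hθ.2, Real.pi_pos])
      have hs1 : Real.sin θ ≤ 1 := Real.sin_le_one θ
      set z := v * Real.sin θ with hz
      have hz0 : 0 < z := mul_pos hv0 hs0
      have hzv : z ≤ v := by
        calc z = v * Real.sin θ := rfl
          _ ≤ v * 1 := by gcongr
          _ = v := mul_one v
      have hzu : z < u := lt_of_le_of_lt hzv hvu
      have hpsiz : psiF Φ z < 0 := hsub z (hIoo ⟨hz0, hzu⟩)
      have hden : 0 < denF Φ M |v| (|v| * Real.sin θ) := by
        apply denF_pos hphi hM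
        rw [habsv, abs_mul, abs_of_pos hv0, abs_of_pos hs0]
        exact hzv
      have : gF Φ M v θ < 0 := by
        apply div_neg_of_neg_of_pos _ hden
        rw [habsv]
        exact mul_neg_of_pos_of_neg hs0 hpsiz
      linarith
    · linarith [Real.pi_pos]
  rw [intervalIntegral.integral_neg] at key
  unfold Jfun
  linarith

lemma Jfun_pos_large (hphi : ∀ x, |Φ x| ≤ M) (hM : 0 < M) (hc : Continuous Φ) :
    0 < Jfun Φ M (12*M) := by
  have hpi := Real.pi_pos
  have habs : |(12:ℝ)*M| = 12*M := abs_of_pos (by linarith)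
  have hgc : Continuous (gF Φ M (12*M)) := by
    have h := (gF_continuous hphi hM hc).comp
      (continuous_const.prodMk continuous_id : Continuous fun θ : ℝ => (12*M, θ))
    exact h
  have hint : ∀ a b : ℝ, IntervalIntegrable (gF Φ M (12*M)) volume a b :=
    fun a b => hgc.intervalIntegrable a b
  -- generic setup for a point θ ∈ [0, π/2]
  have hsetup : ∀ θ, 0 ≤ θ → θ ≤ Real.pi/2 →
      0 ≤ Real.sin θ ∧ Real.sin θ ≤ 1 ∧ |12*M * Real.sin θ| ≤ 12*M ∧
      0 < denF Φ M (12*M) (12*M * Real.sin θ) := by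
    intro θ h0 h1
    have hs0 : 0 ≤ Real.sin θ := Real.sin_nonneg_of_nonneg_of_le_pi h0 (by linarith)
    have hs1 : Real.sin θ ≤ 1 := Real.sin_le_one θ
    have hz : |12*M * Real.sin θ| ≤ 12*M := by
      rw [abs_of_nonneg (by positivity)]
      nlinarith
    exact ⟨hs0, hs1, hz, denF_pos hphi hM hz⟩
  -- bound (a) : everywhere  g ≥ -(1/(24M))
  have hba : ∀ θ ∈ Icc (0:ℝ) (Real.pi/24), -(1/(24*M)) ≤ gF Φ M (12*M) θ := by
    intro θ hθ
    obtain ⟨hs0, hs1, hz, hdpos⟩ := hsetup θ hθ.1 (by linarith [hθ.2])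
    have hdge : M^2 ≤ denF Φ M (12*M) (12*M * Real.sin θ) := denF_ge hphi hM hz
    have hψ : 2*(12*M*Real.sin θ) - 2*M ≤ psiF Φ (12*M*Real.sin θ) := psiF_ge hphi _
    have hkey : Real.sin θ * (2*(12*M*Real.sin θ) - 2*M) ≤ Real.sin θ * psiF Φ (12*M*Real.sin θ) :=
      mul_le_mul_of_nonneg_left hψ hs0
    have h2 := mul_le_mul_of_nonneg_left hkey (show (0:ℝ) ≤ 24*M by positivity)
    unfold gF
    rw [habs]
    have hrw : -(1/(24*M)) = (-1)/(24*M) := by ring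
    rw [hrw, div_le_div_iff₀ (by positivity) hdpos]
    nlinarith [sq_nonneg (24*M*Real.sin θ - M), hdge, h2]
  -- bound (b) : on [π/24, π/4],  g ≥ 0
  have hbb : ∀ θ ∈ Icc (Real.pi/24) (Real.pi/4), 0 ≤ gF Φ M (12*M) θ := by
    intro θ hθ
    have hθ0 : 0 ≤ θ := le_trans (by positivity) hθ.1
    have hθ2 : θ ≤ Real.pi/2 := by linarith [hθ.2]
    obtain ⟨hs0, hs1, hz, hdpos⟩ := hsetup θ hθ0 hθ2
    have hs12 : 1/12 ≤ Real.sin θ := by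
      have h1 : 2/Real.pi * (Real.pi/24) ≤ 2/Real.pi * θ :=
        mul_le_mul_of_nonneg_left hθ.1 (by positivity)
      have h2 : 2/Real.pi * θ ≤ Real.sin θ := Real.mul_le_sin hθ0 hθ2
      have h3 : 2/Real.pi * (Real.pi/24) = 1/12 := by
        field_simp; norm_num
      linarith
    have hψ : 0 ≤ psiF Φ (12*M*Real.sin θ) := by
      have := psiF_ge hphi (12*M*Real.sin θ)
      nlinarith
    unfold gF
    rw [habs]
    exact div_nonneg (mul_nonneg hs0 hψ) hdpos.le
  -- bound (c) : on [π/4, π/2],  g ≥ 1/(81M)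
  have hbc : ∀ θ ∈ Icc (Real.pi/4) (Real.pi/2), 1/(81*M) ≤ gF Φ M (12*M) θ := by
    intro θ hθ
    have hθ0 : 0 ≤ θ := le_trans (by positivity) hθ.1
    obtain ⟨hs0, hs1, hz, hdpos⟩ := hsetup θ hθ0 hθ.2
    have hs12 : 1/2 ≤ Real.sin θ := by
      have h1 : 2/Real.pi * (Real.pi/4) ≤ 2/Real.pi * θ :=
        mul_le_mul_of_nonneg_left hθ.1 (by positivity)
      have h2 : 2/Real.pi * θ ≤ Real.sin θ := Real.mul_le_sin hθ0 hθ.2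
      have h3 : 2/Real.pi * (Real.pi/4) = 1/2 := by field_simp; norm_num
      linarith
    have hψ : 10*M ≤ psiF Φ (12*M*Real.sin θ) := by
      have := psiF_ge hphi (12*M*Real.sin θ)
      nlinarith
    have hsψ : (1/2)*(10*M) ≤ Real.sin θ * psiF Φ (12*M*Real.sin θ) :=
      mul_le_mul hs12 hψ (by positivity) hs0
    -- denominator upper bound
    have hphi1 := abs_le.1 (hphi (12*M*Real.sin θ))
    have hphi2 := abs_le.1 (hphi (-(12*M*Real.sin θ)))
    have hz0 : 0 ≤ 12*M*Real.sin θ := by positivity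
    have hd1le : d1F Φ M (12*M) (12*M*Real.sin θ) ≤ 27*M := by
      unfold d1F; nlinarith [hphi1.1]
    have hd2le : d1F Φ M (12*M) (-(12*M*Real.sin θ)) ≤ 15*M := by
      unfold d1F; nlinarith [hphi2.1]
    have hd2ge : M ≤ d1F Φ M (12*M) (-(12*M*Real.sin θ)) :=
      d1F_ge hphi (by rwa [abs_neg])
    have hdenle : denF Φ M (12*M) (12*M*Real.sin θ) ≤ 405*M^2 := by
      unfold denF
      calc d1F Φ M (12*M) (12*M*Real.sin θ) * d1F Φ M (12*M) (-(12*M*Real.sin θ))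
          ≤ (27*M) * (15*M) := mul_le_mul hd1le hd2le (le_trans hM.le hd2ge) (by positivity)
        _ = 405*M^2 := by ring
    unfold gF
    rw [habs, div_le_div_iff₀ (by positivity) hdpos]
    have h2 := mul_le_mul_of_nonneg_right hsψ (show (0:ℝ) ≤ 81*M by positivity)
    nlinarith [hdenle, h2]
  -- split the integral
  have e1 : (∫ θ in (0:ℝ)..(Real.pi/24), gF Φ M (12*M) θ) +
      (∫ θ in (Real.pi/24)..(Real.pi/4), gF Φ M (12*M) θ) =
      ∫ θ in (0:ℝ)..(Real.pi/4), gF Φ M (12*M) θ :=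
    intervalIntegral.integral_add_adjacent_intervals (hint _ _) (hint _ _)
  have e2 : (∫ θ in (0:ℝ)..(Real.pi/4), gF Φ M (12*M) θ) +
      (∫ θ in (Real.pi/4)..(Real.pi/2), gF Φ M (12*M) θ) =
      ∫ θ in (0:ℝ)..(Real.pi/2), gF Φ M (12*M) θ :=
    intervalIntegral.integral_add_adjacent_intervals (hint _ _) (hint _ _)
  have hb1 : (Real.pi/24 - 0) • (-(1/(24*M))) ≤ ∫ θ in (0:ℝ)..(Real.pi/24), gF Φ M (12*M) θ := by
    rw [← intervalIntegral.integral_const]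
    exact intervalIntegral.integral_mono_on (by positivity) (intervalIntegrable_const)
      (hint _ _) hba
  have hb2 : 0 ≤ ∫ θ in (Real.pi/24)..(Real.pi/4), gF Φ M (12*M) θ :=
    intervalIntegral.integral_nonneg (by linarith) hbb
  have hb3 : (Real.pi/2 - Real.pi/4) • (1/(81*M)) ≤
      ∫ θ in (Real.pi/4)..(Real.pi/2), gF Φ M (12*M) θ := by
    rw [← intervalIntegral.integral_const]
    exact intervalIntegral.integral_mono_on (by linarith) (intervalIntegrable_const)
      (hint _ _) hbc
  rw [smul_eq_mul] at hb1 hb3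
  have hMi : 0 < Real.pi * (1/M) := by positivity
  unfold Jfun
  rw [← e2, ← e1]
  have hc1 : (Real.pi/24 - 0) * -(1/(24*M)) = -(1/576) * (Real.pi * (1/M)) := by ring
  have hc3 : (Real.pi/2 - Real.pi/4) * (1/(81*M)) = (1/324) * (Real.pi * (1/M)) := by ring
  rw [hc1] at hb1
  rw [hc3] at hb3
  linarith [hb1, hb2, hb3, hMi]


end Stmt14Aux

open Stmt14Aux in
/-- for bounded Lipschitz `Φ` with `M = sup|Φ| > 0`, differentiable at `0`
with `Φ'(0) > 1`, the matching functional `I` is continuous on `(0,∞)` and has a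
zero `V̄ > 0` (the traveling wave velocity). -/
theorem stmt_14 (Φ : ℝ → ℝ) (M : ℝ) (K : NNReal) (hΦlip : LipschitzWith K Φ)
    (hbdd : BddAbove (Set.range fun x => |Φ x|))
    (hM : M = ⨆ x, |Φ x|) (hMpos : 0 < M)
    (hdiff : DifferentiableAt ℝ Φ 0) (hder : 1 < deriv Φ 0) :
    ContinuousOn (fun V => Ifun Φ M V) (Ioi (0:ℝ)) ∧
    ∃ Vbar > 0, Ifun Φ M Vbar = 0 := by
  have hphi : ∀ x, |Φ x| ≤ M := by
    intro x
    rw [hM]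
    exact le_ciSup hbdd x
  have hc : Continuous Φ := hΦlip.continuous
  have hJc : Continuous (Jfun Φ M) := Jfun_continuous hphi hMpos hc
  have hEq : Set.EqOn (fun V => Ifun Φ M V) (Jfun Φ M) (Ioi (0:ℝ)) := fun V hV =>
    Ifun_eq_Jfun hphi hMpos hc hV
  constructor
  · exact (hJc.continuousOn).congr hEq
  · obtain ⟨v, hv0, hvM, hvneg⟩ := Jfun_neg_small hphi hMpos hc hdiff hder
    have hvV : v ≤ 12*M := by linarith
    have hpos : 0 < Jfun Φ M (12*M) := Jfun_pos_large hphi hMpos hc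
    have h0 : (0:ℝ) ∈ Icc (Jfun Φ M v) (Jfun Φ M (12*M)) := ⟨hvneg.le, hpos.le⟩
    obtain ⟨c, hc1, hc2⟩ := intermediate_value_Icc hvV (hJc.continuousOn) h0
    refine ⟨c, lt_of_lt_of_le hv0 hc1.1, ?_⟩
    have := hEq (lt_of_lt_of_le hv0 hc1.1)
    simp only at this
    rw [this, hc2]
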